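/- Let Φ : ℕ → ℝ with Φ(0)=0 and Φ(n) ≠ 0 for n ≥ 1. Define g(n,j) = Φ(j) C(n,j) ∑_{a=0}^{n-j} C(n-j,a) (-1)^a / Φ(j+a) for 1 ≤ j ≤ n. Then g(n,n) = 1 and g satisfies the recursion g(n,j) = ((j+1-q(j+1:1))/(n+1)) g(n+1,j+1) + ((n+1-j)/(n+1)) g(n+1,j), where q(j+1:1) = (j+1)(1 - Φ(j)/Φ(j+1)). -/

import Mathlib

/-- The Green matrix `g(n,j) = Φ(j) C(n,j) ∑_{a=0}^{n-j} C(n-j,a) (-1)^a / Φ(j+a)`. -/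
noncomputable def greenG (Φ : ℕ → ℝ) (n j : ℕ) : ℝ :=
  Φ j * (n.choose j : ℝ) *
    ∑ a ∈ Finset.range (n - j + 1), ((n - j).choose a : ℝ) * (-1 : ℝ) ^ a / Φ (j + a)

lemma pascal_sum (Φ : ℕ → ℝ) (j m : ℕ) :
    ∑ a ∈ Finset.range (m + 2), (((m+1).choose a : ℕ) : ℝ) * (-1 : ℝ) ^ a / Φ (j + a)
      = ∑ a ∈ Finset.range (m + 1), ((m.choose a : ℕ) : ℝ) * (-1 : ℝ) ^ a / Φ (j + a)
        - ∑ a ∈ Finset.range (m + 1), ((m.choose a : ℕ) : ℝ) * (-1 : ℝ) ^ a / Φ (j + (a + 1)) := by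
  rw [Finset.sum_range_succ' _ (m + 1)]
  have h1 : ∀ i ∈ Finset.range (m + 1),
      (((m+1).choose (i+1) : ℕ) : ℝ) * (-1 : ℝ) ^ (i+1) / Φ (j + (i + 1))
        = ((m.choose (i+1) : ℕ) : ℝ) * (-1 : ℝ) ^ (i+1) / Φ (j + (i + 1))
          - ((m.choose i : ℕ) : ℝ) * (-1 : ℝ) ^ i / Φ (j + (i + 1)) := by
    intro i _
    rw [Nat.choose_succ_succ]
    push_cast
    rw [pow_succ]
    ring
  rw [Finset.sum_congr rfl h1, Finset.sum_sub_distrib]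
  have h2 : ∑ i ∈ Finset.range (m + 1),
      ((m.choose (i+1) : ℕ) : ℝ) * (-1 : ℝ) ^ (i+1) / Φ (j + (i + 1))
        + (((m+1).choose 0 : ℕ) : ℝ) * (-1 : ℝ) ^ 0 / Φ (j + 0)
      = ∑ a ∈ Finset.range (m + 1), ((m.choose a : ℕ) : ℝ) * (-1 : ℝ) ^ a / Φ (j + a) := by
    rw [Finset.sum_range_succ,
      Finset.sum_range_succ' (fun a => ((m.choose a : ℕ) : ℝ) * (-1 : ℝ) ^ a / Φ (j + a)) m]
    simp [Nat.choose_succ_self]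
  linarith [h2]

theorem stmt15 (Φ : ℕ → ℝ) (hΦ0 : Φ 0 = 0) (hΦne : ∀ n : ℕ, 1 ≤ n → Φ n ≠ 0) :
    (∀ n : ℕ, 1 ≤ n → greenG Φ n n = 1) ∧
    (∀ n j : ℕ, 1 ≤ j → j ≤ n →
      greenG Φ n j
        = ((j : ℝ) + 1 - ((j : ℝ) + 1) * (1 - Φ j / Φ (j + 1))) / ((n : ℝ) + 1)
            * greenG Φ (n + 1) (j + 1)
        + ((n : ℝ) + 1 - (j : ℝ)) / ((n : ℝ) + 1) * greenG Φ (n + 1) j) := by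
  constructor
  · intro n hn
    simp only [greenG, Nat.sub_self, Nat.choose_self, Nat.cast_one]
    rw [Finset.sum_range_one]
    simp [hΦne n hn]
  · intro n j hj hjn
    obtain ⟨m, rfl⟩ := Nat.exists_eq_add_of_le hjn
    have hΦ1 : Φ (j + 1) ≠ 0 := hΦne _ (by omega)
    have hn1 : ((j : ℝ) + (m : ℝ) + 1) ≠ 0 := by positivity
    have e1 : j + m - j = m := by omega
    have e2 : j + m + 1 - (j + 1) = m := by omega
    have e3 : j + m + 1 - j = m + 1 := by omega
    simp only [greenG, e1, e2, e3]
    have hidx : ∀ a : ℕ, j + 1 + a = j + (a + 1) := by intro a; omega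
    have hS1 : ∑ a ∈ Finset.range (m + 1), ((m.choose a : ℕ) : ℝ) * (-1 : ℝ) ^ a / Φ (j + 1 + a)
        = ∑ a ∈ Finset.range (m + 1), ((m.choose a : ℕ) : ℝ) * (-1 : ℝ) ^ a / Φ (j + (a + 1)) := by
      apply Finset.sum_congr rfl; intro a _; rw [hidx a]
    rw [hS1, pascal_sum Φ j m]
    set S : ℝ := ∑ a ∈ Finset.range (m + 1), ((m.choose a : ℕ) : ℝ) * (-1 : ℝ) ^ a / Φ (j + a) with hS
    set S1 : ℝ := ∑ a ∈ Finset.range (m + 1), ((m.choose a : ℕ) : ℝ) * (-1 : ℝ) ^ a / Φ (j + (a + 1)) with hS1'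
    have hA : ((j : ℝ) + 1) * (((j + m + 1).choose (j + 1) : ℕ) : ℝ)
        = ((j : ℝ) + (m : ℝ) + 1) * (((j + m).choose j : ℕ) : ℝ) := by
      have := Nat.add_one_mul_choose_eq (j + m) j
      have h := congrArg (fun x : ℕ => (x : ℝ)) this
      push_cast at h
      linarith [h]
    have hB : ((m : ℝ) + 1) * (((j + m + 1).choose j : ℕ) : ℝ)
        = ((j : ℝ) + (m : ℝ) + 1) * (((j + m).choose j : ℕ) : ℝ) := by
      have h0 : (j + m).choose j * (j + m + 1) = (j + m + 1).choose j * (m + 1) := by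
        have := Nat.choose_mul_succ_eq (j + m) j
        simpa [Nat.add_sub_cancel_left, Nat.succ_sub (by omega : j ≤ j + m)] using this
      have h := congrArg (fun x : ℕ => (x : ℝ)) h0
      push_cast at h
      linarith [h]
    push_cast
    field_simp
    linear_combination (-Φ j * S1) * hA
      - (Φ j * (S - S1)) * hB
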